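/- Let A be the bounded multiplication operator (Af)(x) = e^{−x²}f(x) on L²(ℝ) and B the unbounded multiplication operator (Bf)(x) = e^{x²}f(x) with domain D(B) = {f ∈ L²(ℝ) : e^{x²}f ∈ L²(ℝ)}. Then: A is bounded and self-adjoint; B is self-adjoint (hence closed); BA equals the identity operator on L²(ℝ) (hence BA is normal); AB is the restriction of the identity to D(B), hence AB is not closed and therefore not normal; and A*AB ⊂ BA*A. -/

import Mathlib

noncomputable section

variable {H : Type*} [NormedAddCommGroup H] [InnerProductSpace ℂ H] [CompleteSpace H]

namespace LinearPMap

/-- The composition `S ∘ T` of two partially defined linear operators, with its natural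
domain `{x ∈ D(T) : T x ∈ D(S)}`. -/
noncomputable def pcomp (S T : H →ₗ.[ℂ] H) : H →ₗ.[ℂ] H :=
  { domain := (S.domain.comap T.toFun).map T.domain.subtype
    toFun := (S.toFun.comp ((T.toFun.comp (S.domain.comap T.toFun).subtype).codRestrict
        S.domain fun x => x.2)).comp
      (Submodule.equivMapOfInjective T.domain.subtype Subtype.val_injective
        (S.domain.comap T.toFun)).symm.toLinearMap }

/-- A bounded operator viewed as a partially defined operator with domain the
whole space. -/
noncomputable def ofCLM (A : H →L[ℂ] H) : H →ₗ.[ℂ] H :=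
  A.toLinearMap.toPMap ⊤

/-- An unbounded densely defined operator is *normal* if it is closed and
`N N* = N* N` (including equality of the natural domains). -/
def IsNormalPMap (N : H →ₗ.[ℂ] H) : Prop :=
  Dense (N.domain : Set H) ∧ N.IsClosed ∧ N.pcomp N.adjoint = N.adjoint.pcomp N

end LinearPMap

open MeasureTheory LinearPMap ContinuousLinearMap

local notation "L2R" => Lp ℂ 2 (volume : Measure ℝ)

/-- A bounded operator `T` is *normal* if `T T* = T* T`. -/
def IsNormalOp (T : H →L[ℂ] H) : Prop :=
  T * ContinuousLinearMap.adjoint T = ContinuousLinearMap.adjoint T * T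

/-! ### Auxiliary lemmas -/

set_option linter.unusedSectionVars false

local notation "⟪" x ", " y "⟫" => @inner ℂ _ _ x y

namespace LinearPMap

theorem pcomp_domain' (S T : H →ₗ.[ℂ] H) :
    (S.pcomp T).domain = (S.domain.comap T.toFun).map T.domain.subtype := rfl

theorem mem_pcomp_domain {S T : H →ₗ.[ℂ] H} {x : H} :
    x ∈ (S.pcomp T).domain ↔ ∃ hx : x ∈ T.domain, T ⟨x, hx⟩ ∈ S.domain := by
  rw [pcomp_domain']
  constructor
  · rintro ⟨y, hmem, rfl⟩
    exact ⟨y.2, hmem⟩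
  · rintro ⟨hx, hmem⟩
    exact ⟨⟨x, hx⟩, hmem, rfl⟩

theorem pcomp_apply (S T : H →ₗ.[ℂ] H) (x : (S.pcomp T).domain)
    (hx : (x : H) ∈ T.domain) (hx2 : T ⟨x, hx⟩ ∈ S.domain) :
    (S.pcomp T) x = S ⟨T ⟨x, hx⟩, hx2⟩ := by
  set e := Submodule.equivMapOfInjective T.domain.subtype Subtype.val_injective
      (S.domain.comap T.toFun) with he
  have hval : ((((e.symm x) : S.domain.comap T.toFun) : T.domain) : H) = (x : H) :=
    Submodule.map_equivMapOfInjective_symm_apply _ _ _ x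
  have h1 : (((e.symm x) : S.domain.comap T.toFun) : T.domain) = ⟨(x : H), hx⟩ :=
    Subtype.ext hval
  show S.toFun ⟨T.toFun ((e.symm x : S.domain.comap T.toFun) : T.domain), _⟩ = _
  congr 1
  apply Subtype.ext
  show T.toFun _ = T.toFun _
  rw [h1]

/-- The adjoint of a densely defined operator is always closed. -/
theorem adjoint_isClosed'' {T : H →ₗ.[ℂ] H} (hT : Dense (T.domain : Set H)) :
    T.adjoint.IsClosed := by
  apply IsSeqClosed.isClosed
  rintro p q hp hq
  choose y hy1 hy2 using fun n => (T.adjoint.mem_graph_iff.mp (hp n))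
  have h1 : Filter.Tendsto (fun n => (p n).1) Filter.atTop (nhds q.1) :=
    (continuous_fst.tendsto q).comp hq
  have h2 : Filter.Tendsto (fun n => (p n).2) Filter.atTop (nhds q.2) :=
    (continuous_snd.tendsto q).comp hq
  have key : ∀ v : T.domain, ⟪q.2, (v : H)⟫ = ⟪q.1, T v⟫ := by
    intro v
    have l1 : Filter.Tendsto (fun n => ⟪(p n).2, (v : H)⟫) Filter.atTop (nhds ⟪q.2, (v : H)⟫) :=
      h2.inner tendsto_const_nhds
    have l2 : Filter.Tendsto (fun n => ⟪(p n).1, T v⟫) Filter.atTop (nhds ⟪q.1, T v⟫) :=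
      h1.inner tendsto_const_nhds
    have heq : ∀ n, ⟪(p n).2, (v : H)⟫ = ⟪(p n).1, T v⟫ := by
      intro n
      rw [← hy1 n, ← hy2 n]
      exact LinearPMap.adjoint_isFormalAdjoint hT (y n) v
    rw [funext heq] at l1
    exact tendsto_nhds_unique l1 l2
  have hmem : q.1 ∈ T.adjoint.domain :=
    LinearPMap.mem_adjoint_domain_of_exists _ ⟨q.2, fun v => key v⟩
  have happ : T.adjoint ⟨q.1, hmem⟩ = q.2 :=
    LinearPMap.adjoint_apply_eq hT _ fun v => key v
  exact T.adjoint.mem_graph_iff.mpr ⟨⟨q.1, hmem⟩, rfl, happ⟩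

end LinearPMap

lemma gauss_memℒp : MemLp (fun x : ℝ => (Real.exp (-x^2) : ℂ)) 2 (volume : Measure ℝ) := by
  rw [memLp_two_iff_integrable_sq_norm]
  · have h : Integrable (fun x : ℝ => Real.exp (-2 * x^2)) volume :=
      integrable_exp_neg_mul_sq (by norm_num)
    apply h.congr
    filter_upwards with x
    have hx : ∀ x : ℝ, -2*x^2 = -x^2 + -x^2 := fun x => by ring
    rw [Complex.norm_real, Real.norm_eq_abs, abs_of_pos (Real.exp_pos _), hx, Real.exp_add, sq]
    ring
  · exact (Complex.continuous_ofReal.comp (by continuity)).aestronglyMeasurable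

lemma one_not_memℒp : ¬ MemLp (fun _ : ℝ => (1:ℂ)) 2 (volume : Measure ℝ) := by
  rw [memLp_two_iff_integrable_sq_norm aestronglyMeasurable_const]
  intro h
  have h2 := (integrable_const_iff (c := (1:ℝ))).mp (by simpa using h)
  rcases h2 with h2 | h2
  · norm_num at h2
  · exact absurd h2.measure_univ_lt_top (by simp)

lemma memℒp_mul_of_bound {g : ℝ → ℂ} (hg : MemLp g 2 (volume : Measure ℝ)) {φ : ℝ → ℂ}
    (hφ : AEStronglyMeasurable φ volume) (C : ℝ) (hC : ∀ᵐ x ∂(volume : Measure ℝ), ‖φ x‖ ≤ C) :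
    MemLp (fun x => φ x * g x) 2 (volume : Measure ℝ) :=
  hg.of_le_mul (hφ.mul hg.1) (hC.mono fun x hx => by
    rw [norm_mul]; exact mul_le_mul_of_nonneg_right hx (norm_nonneg _))

lemma inner_L2 (f g : L2R) :
    ⟪f, g⟫ = ∫ x : ℝ, (starRingEnd ℂ) (f x) * g x := by
  rw [MeasureTheory.L2.inner_def]
  simp [RCLike.inner_apply]
  exact integral_congr_ae (Filter.Eventually.of_forall fun x => mul_comm _ _)

lemma ae_zero_of_sq_integral_windows {u : ℝ → ℂ}
    (hint : ∀ n : ℕ, IntegrableOn (fun x => ‖u x‖^2) (Set.Icc (-(n:ℝ)) n) volume)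
    (h : ∀ n : ℕ, ∫ x in Set.Icc (-(n:ℝ)) n, ‖u x‖^2 = 0) :
    u =ᵐ[volume] 0 := by
  have key : ∀ n : ℕ, ∀ᵐ x ∂(volume : Measure ℝ), x ∈ Set.Icc (-(n:ℝ)) n → u x = 0 := by
    intro n
    have h0 : (fun x => ‖u x‖^2) =ᵐ[volume.restrict (Set.Icc (-(n:ℝ)) n)] 0 :=
      (integral_eq_zero_iff_of_nonneg (fun x => sq_nonneg _) (hint n)).mp (h n)
    have h1 : ∀ᵐ x ∂(volume.restrict (Set.Icc (-(n:ℝ)) n)), ‖u x‖^2 = 0 := by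
      filter_upwards [h0] with x hx; simpa using hx
    rw [ae_restrict_iff' measurableSet_Icc] at h1
    filter_upwards [h1] with x hx hmem
    have h2 := hx hmem
    have h3 : ‖u x‖ = 0 := (pow_eq_zero_iff (n := 2) (by norm_num)).mp h2
    simpa using h3
  rw [← ae_all_iff] at key
  filter_upwards [key] with x hx
  obtain ⟨n, hn⟩ : ∃ n : ℕ, |x| ≤ n := exists_nat_ge |x|
  exact hx n ⟨(abs_le.mp hn).1, (abs_le.mp hn).2⟩

lemma integrable_mul_L2 {f g : ℝ → ℂ} (hf : MemLp f 2 (volume : Measure ℝ))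
    (hg : MemLp g 2 (volume : Measure ℝ)) :
    Integrable (fun x => f x * g x) volume := by
  rw [← memLp_one_iff_integrable]
  have h2 : (1 : ENNReal) = 1/2 + 1/2 := by
    rw [ENNReal.add_halves]
  have := hg.smul (φ := f) hf (p := 2) (q := 2) (r := 1)
  exact this

lemma memℒp_conj {f : ℝ → ℂ} (hf : MemLp f 2 (volume : Measure ℝ)) :
    MemLp (fun x => (starRingEnd ℂ) (f x)) 2 (volume : Measure ℝ) :=
  hf.of_le_mul (RCLike.continuous_conj.comp_aestronglyMeasurable hf.1)
    (Filter.Eventually.of_forall fun x => by rw [RCLike.norm_conj, one_mul])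

lemma integral_ofReal' {μ : Measure ℝ} (f : ℝ → ℝ) :
    ∫ x, ((f x : ℝ) : ℂ) ∂μ = ((∫ x, f x ∂μ : ℝ) : ℂ) := integral_ofReal

lemma conj_mul_self (z : ℂ) : (starRingEnd ℂ) z * z = ((‖z‖^2 : ℝ) : ℂ) := by
  rw [mul_comm, Complex.mul_conj, Complex.normSq_eq_norm_sq]

lemma exp_zero_sq (x : ℝ) : (Real.exp (0 * x^2) : ℂ) = 1 := by norm_num

lemma exp_one_sq (x : ℝ) : (Real.exp (1 * x^2) : ℂ) = (Real.exp (x^2) : ℂ) := by norm_num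

lemma exp_two_sq (x : ℝ) : (Real.exp (2 * x^2) : ℂ)
    = (Real.exp (x^2) : ℂ) * (Real.exp (x^2) : ℂ) := by
  rw [two_mul, Real.exp_add, Complex.ofReal_mul]

lemma exp_mul_exp_neg (x : ℝ) : (Real.exp (x^2) : ℂ) * (Real.exp (-x^2) : ℂ) = 1 := by
  rw [← Complex.ofReal_mul, ← Real.exp_add]
  norm_num

/-- The indicator of `[-n, n]` times `exp (c x²)`, as a multiplier. -/
def indExp (c : ℝ) (n : ℕ) : ℝ → ℂ :=
  Set.indicator (Set.Icc (-(n:ℝ)) n) (fun x => (Real.exp (c * x^2) : ℂ))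

lemma indExp_aesm (c : ℝ) (n : ℕ) : AEStronglyMeasurable (indExp c n) volume :=
  ((Complex.continuous_ofReal.comp (by continuity)).aestronglyMeasurable).indicator
    measurableSet_Icc

lemma indExp_bound (c : ℝ) (n : ℕ) : ∀ x : ℝ, ‖indExp c n x‖ ≤ Real.exp (|c| * n^2) := by
  intro x
  by_cases hx : x ∈ Set.Icc (-(n:ℝ)) n
  · rw [indExp, Set.indicator_of_mem hx]
    rw [Complex.norm_real, Real.norm_eq_abs, abs_of_pos (Real.exp_pos _)]
    apply Real.exp_le_exp.mpr
    have hxn : x^2 ≤ (n:ℝ)^2 := sq_le_sq' hx.1 hx.2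
    calc c * x^2 ≤ |c * x^2| := le_abs_self _
    _ = |c| * x^2 := by rw [abs_mul, abs_of_nonneg (sq_nonneg x)]
    _ ≤ |c| * n^2 := by gcongr
  · rw [indExp, Set.indicator_of_notMem hx]
    simp [Real.exp_pos, le_of_lt]

lemma memℒp_indExp_mul (c : ℝ) (n : ℕ) {g : ℝ → ℂ} (hg : MemLp g 2 (volume : Measure ℝ)) :
    MemLp (fun x => indExp c n x * g x) 2 (volume : Measure ℝ) :=
  memℒp_mul_of_bound hg (indExp_aesm c n) _
    (Filter.Eventually.of_forall (indExp_bound c n))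

/-! ### Lemmas about `B` -/

section Bfacts

variable (B : L2R →ₗ.[ℂ] L2R)
    (hBdom : ∀ f : L2R, f ∈ B.domain ↔
      MemLp (fun x : ℝ => (Real.exp (x ^ 2) : ℂ) * f x) 2 volume)
    (hB : ∀ f : B.domain,
      (B f : ℝ → ℂ) =ᵐ[volume] fun x : ℝ => (Real.exp (x ^ 2) : ℂ) * (f : L2R) x)

include hBdom in
lemma B_dense : Dense (B.domain : Set L2R) := by
  rw [Submodule.dense_iff_topologicalClosure_eq_top, Submodule.topologicalClosure_eq_top_iff,
    Submodule.eq_bot_iff]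
  intro g hg
  set u : ℝ → ℂ := (g : ℝ → ℂ) with hu
  have hg2 : ∀ n : ℕ, MemLp (fun x => indExp 0 n x * u x) 2 (volume : Measure ℝ) :=
    fun n => memℒp_indExp_mul 0 n (Lp.memLp g)
  have hmem : ∀ n : ℕ, ((hg2 n).toLp _) ∈ B.domain := by
    intro n
    rw [hBdom]
    have heq : (fun x : ℝ => (Real.exp (x ^ 2) : ℂ) * ((hg2 n).toLp _) x)
        =ᵐ[volume] fun x => indExp 1 n x * u x := by
      filter_upwards [(hg2 n).coeFn_toLp] with x hx
      rw [hx]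
      by_cases hxm : x ∈ Set.Icc (-(n:ℝ)) n
      · simp only [indExp, Set.indicator_of_mem hxm]
        rw [exp_zero_sq, one_mul, one_mul]
      · simp only [indExp, Set.indicator_of_notMem hxm]
        ring
    exact (memLp_congr_ae heq).mpr (memℒp_indExp_mul 1 n (Lp.memLp g))
  have hvanish : ∀ n : ℕ, ∫ x in Set.Icc (-(n:ℝ)) n, ‖u x‖^2 = 0 := by
    intro n
    have h0 : ⟪((hg2 n).toLp _ : L2R), g⟫ = 0 :=
      (Submodule.mem_orthogonal _ _).mp hg _ (hmem n)
    have h1 : ⟪((hg2 n).toLp _ : L2R), g⟫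
        = ∫ x : ℝ, Set.indicator (Set.Icc (-(n:ℝ)) n) (fun x => ((‖u x‖^2 : ℝ) : ℂ)) x := by
      rw [inner_L2]
      apply integral_congr_ae
      filter_upwards [(hg2 n).coeFn_toLp] with x hx
      rw [hx]
      by_cases hxm : x ∈ Set.Icc (-(n:ℝ)) n
      · rw [Set.indicator_of_mem hxm, ← conj_mul_self]
        simp only [indExp, Set.indicator_of_mem hxm]
        rw [exp_zero_sq]
        rw [hu]
        ring
      · rw [Set.indicator_of_notMem hxm]
        simp only [indExp, Set.indicator_of_notMem hxm]
        simp
    rw [h0, integral_indicator measurableSet_Icc, integral_ofReal'] at h1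
    exact_mod_cast h1.symm
  have hint : ∀ n : ℕ, IntegrableOn (fun x => ‖u x‖^2) (Set.Icc (-(n:ℝ)) n) volume := by
    intro n
    have : Integrable (fun x => ‖u x‖^2) volume :=
      (memLp_two_iff_integrable_sq_norm (Lp.aestronglyMeasurable g)).mp (Lp.memLp g)
    exact this.integrableOn
  have hzero : u =ᵐ[volume] 0 := ae_zero_of_sq_integral_windows hint hvanish
  exact Lp.ext (hzero.trans (Lp.coeFn_zero ℂ 2 volume).symm)

include hBdom hB in
lemma B_symmetric : B.IsFormalAdjoint B := by
  intro x y
  rw [inner_L2, inner_L2]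
  apply integral_congr_ae
  filter_upwards [hB x, hB y] with t h1 h2
  rw [h1, h2, map_mul, Complex.conj_ofReal]
  ring

include hBdom hB in
lemma B_selfAdjoint : B.adjoint = B := by
  have hdense := B_dense B hBdom
  have hle : B ≤ B.adjoint := (B_symmetric B hBdom hB).le_adjoint hdense
  have hsub : B.adjoint.domain ≤ B.domain := by
    intro yv hyv
    set y : L2R := yv with hy
    set w : L2R := B.adjoint ⟨yv, hyv⟩ with hw
    have hinner : ∀ f : B.domain, ⟪w, (f : L2R)⟫ = ⟪y, B f⟫ := fun f =>
      LinearPMap.adjoint_isFormalAdjoint hdense ⟨yv, hyv⟩ f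
    have hkey : (fun x : ℝ => (Real.exp (x^2) : ℂ) * y x) =ᵐ[volume] (w : ℝ → ℂ) := by
      set u : ℝ → ℂ := fun x => w x - (Real.exp (x^2) : ℂ) * y x with hu
      have hTn : ∀ n : ℕ, MemLp (fun x => indExp 0 n x * w x - indExp 1 n x * y x) 2
          (volume : Measure ℝ) :=
        fun n => (memℒp_indExp_mul 0 n (Lp.memLp w)).sub (memℒp_indExp_mul 1 n (Lp.memLp y))
      have hmemn : ∀ n : ℕ, ((hTn n).toLp _) ∈ B.domain := by
        intro n
        rw [hBdom]
        have heq : (fun x : ℝ => (Real.exp (x ^ 2) : ℂ) * ((hTn n).toLp _) x)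
            =ᵐ[volume] fun x => indExp 1 n x * w x - indExp 2 n x * y x := by
          filter_upwards [(hTn n).coeFn_toLp] with x hx
          rw [hx]
          by_cases hxm : x ∈ Set.Icc (-(n:ℝ)) n
          · simp only [indExp, Set.indicator_of_mem hxm]
            rw [exp_zero_sq, exp_one_sq, exp_two_sq, one_mul]
            ring
          · simp only [indExp, Set.indicator_of_notMem hxm]
            ring
        refine (memLp_congr_ae heq).mpr ?_
        exact (memℒp_indExp_mul 1 n (Lp.memLp w)).sub (memℒp_indExp_mul 2 n (Lp.memLp y))
      have hvanish : ∀ n : ℕ, ∫ x in Set.Icc (-(n:ℝ)) n, ‖u x‖^2 = 0 := by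
        intro n
        have h0 : ⟪w, (((hTn n).toLp _ : L2R))⟫ = ⟪y, B ⟨_, hmemn n⟩⟫ :=
          hinner ⟨_, hmemn n⟩
        have hBfn : (B ⟨_, hmemn n⟩ : ℝ → ℂ) =ᵐ[volume]
            fun x => (Real.exp (x^2) : ℂ) * ((hTn n).toLp _ : ℝ → ℂ) x := hB _
        have hL : ⟪w, (((hTn n).toLp _ : L2R))⟫ =
            ∫ x : ℝ, (starRingEnd ℂ) (w x) * (indExp 0 n x * w x - indExp 1 n x * y x) := by
          rw [inner_L2]
          apply integral_congr_ae
          filter_upwards [(hTn n).coeFn_toLp] with x hx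
          rw [hx]
        have hR : ⟪y, B ⟨_, hmemn n⟩⟫ =
            ∫ x : ℝ, (starRingEnd ℂ) (y x) *
              ((Real.exp (x^2) : ℂ) * (indExp 0 n x * w x - indExp 1 n x * y x)) := by
          rw [inner_L2]
          apply integral_congr_ae
          filter_upwards [hBfn, (hTn n).coeFn_toLp] with x h1 h2
          rw [h1, h2]
        have hintL : Integrable (fun x : ℝ =>
            (starRingEnd ℂ) (w x) * (indExp 0 n x * w x - indExp 1 n x * y x)) volume :=
          integrable_mul_L2 (memℒp_conj (Lp.memLp w)) (hTn n)
        have hintR : Integrable (fun x : ℝ => (starRingEnd ℂ) (y x) *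
            ((Real.exp (x^2) : ℂ) * (indExp 0 n x * w x - indExp 1 n x * y x))) volume := by
          have hmem2 : MemLp (fun x : ℝ =>
              (Real.exp (x^2) : ℂ) * (indExp 0 n x * w x - indExp 1 n x * y x)) 2
              (volume : Measure ℝ) :=
            (memLp_congr_ae ?_).mp ((hBdom _).mp (hmemn n))
          exact integrable_mul_L2 (memℒp_conj (Lp.memLp y)) hmem2
          -- side goal: e^{x²}·(toLp Tn) =ᵐ e^{x²}·Tn
          filter_upwards [(hTn n).coeFn_toLp] with x hx
          rw [hx]
        have hdiff : (0 : ℂ) =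
            ∫ x : ℝ, ((starRingEnd ℂ) (w x) * (indExp 0 n x * w x - indExp 1 n x * y x)
              - (starRingEnd ℂ) (y x) *
                ((Real.exp (x^2) : ℂ) * (indExp 0 n x * w x - indExp 1 n x * y x))) := by
          rw [integral_sub hintL hintR, ← hL, ← hR, h0, sub_self]
        have hptw : ∀ x : ℝ,
            (starRingEnd ℂ) (w x) * (indExp 0 n x * w x - indExp 1 n x * y x)
              - (starRingEnd ℂ) (y x) *
                ((Real.exp (x^2) : ℂ) * (indExp 0 n x * w x - indExp 1 n x * y x))
            = Set.indicator (Set.Icc (-(n:ℝ)) n) (fun x => ((‖u x‖^2 : ℝ) : ℂ)) x := by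
          intro x
          by_cases hxm : x ∈ Set.Icc (-(n:ℝ)) n
          · rw [Set.indicator_of_mem hxm, ← conj_mul_self]
            simp only [indExp, Set.indicator_of_mem hxm, hu]
            rw [exp_zero_sq, exp_one_sq]
            simp only [_root_.map_sub, _root_.map_mul, Complex.conj_ofReal, one_mul]
            ring
          · rw [Set.indicator_of_notMem hxm]
            simp only [indExp, Set.indicator_of_notMem hxm]
            simp
        rw [integral_congr_ae (Filter.Eventually.of_forall hptw),
          integral_indicator measurableSet_Icc, integral_ofReal'] at hdiff
        exact_mod_cast hdiff.symm
      have hint : ∀ n : ℕ, IntegrableOn (fun x => ‖u x‖^2) (Set.Icc (-(n:ℝ)) n) volume := by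
        intro n
        have hTn2 : Integrable
            (fun x => ‖indExp 0 n x * w x - indExp 1 n x * y x‖^2) volume :=
          (memLp_two_iff_integrable_sq_norm (hTn n).1).mp (hTn n)
        rw [← integrable_indicator_iff measurableSet_Icc]
        apply hTn2.congr
        filter_upwards with x
        by_cases hxm : x ∈ Set.Icc (-(n:ℝ)) n
        · rw [Set.indicator_of_mem hxm]
          simp only [indExp, Set.indicator_of_mem hxm, hu]
          rw [exp_zero_sq, exp_one_sq, one_mul]
        · rw [Set.indicator_of_notMem hxm]
          simp only [indExp, Set.indicator_of_notMem hxm]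
          simp
      have hzero : u =ᵐ[volume] 0 := ae_zero_of_sq_integral_windows hint hvanish
      filter_upwards [hzero] with x hx
      simp only [hu, Pi.zero_apply] at hx
      linear_combination -hx
    have : MemLp (fun x : ℝ => (Real.exp (x^2) : ℂ) * y x) 2 (volume : Measure ℝ) :=
      (memLp_congr_ae hkey).mpr (Lp.memLp w)
    have h2 : MemLp (fun x : ℝ => (Real.exp (x ^ 2) : ℂ) * y x) 2 (volume : Measure ℝ) := this
    exact (hBdom y).mpr h2
  exact (LinearPMap.eq_of_le_of_domain_eq hle (le_antisymm hle.1 hsub)).symm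

include hBdom hB in
lemma B_isClosed : B.IsClosed := by
  have := adjoint_isClosed'' (B_dense B hBdom)
  rwa [B_selfAdjoint B hBdom hB] at this

end Bfacts

/-! ### Lemmas about the identity and compositions with bounded operators -/

lemma pcomp_ofCLM_left_domain (T : L2R →L[ℂ] L2R) (B : L2R →ₗ.[ℂ] L2R) :
    ((ofCLM T).pcomp B).domain = B.domain := by
  ext x
  rw [mem_pcomp_domain]
  constructor
  · rintro ⟨hx, -⟩; exact hx
  · intro hx; exact ⟨hx, Submodule.mem_top⟩

lemma id_graph : ((((LinearMap.id : L2R →ₗ[ℂ] L2R).toPMap ⊤).graph :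
      Submodule ℂ (L2R × L2R)) : Set (L2R × L2R)) = {p : L2R × L2R | p.1 = p.2} := by
  ext p
  simp only [Set.mem_setOf_eq, SetLike.mem_coe, LinearPMap.mem_graph_iff]
  constructor
  · rintro ⟨y, h1, h2⟩
    rw [← h1, ← h2]
    rfl
  · intro h
    refine ⟨⟨p.1, Submodule.mem_top⟩, rfl, ?_⟩
    change p.1 = p.2
    exact h

lemma id_isClosed : ((LinearMap.id : L2R →ₗ[ℂ] L2R).toPMap ⊤).IsClosed := by
  show IsClosed ((((LinearMap.id : L2R →ₗ[ℂ] L2R).toPMap ⊤).graph :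
    Submodule ℂ (L2R × L2R)) : Set (L2R × L2R))
  rw [id_graph]
  exact isClosed_eq continuous_fst continuous_snd

lemma id_dense : Dense ((((LinearMap.id : L2R →ₗ[ℂ] L2R).toPMap ⊤).domain : Submodule ℂ L2R)
    : Set L2R) := by
  show Dense ((⊤ : Submodule ℂ L2R) : Set L2R)
  rw [Submodule.top_coe]
  exact dense_univ

lemma id_adjoint : ((LinearMap.id : L2R →ₗ[ℂ] L2R).toPMap ⊤).adjoint
    = (LinearMap.id : L2R →ₗ[ℂ] L2R).toPMap ⊤ := by
  have h1 : (LinearMap.id : L2R →ₗ[ℂ] L2R) = ((1 : L2R →L[ℂ] L2R) : L2R →ₗ[ℂ] L2R) := rfl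
  have hd : Dense (((⊤ : Submodule ℂ L2R)) : Set L2R) := by
    rw [Submodule.top_coe]; exact dense_univ
  rw [h1, ContinuousLinearMap.toPMap_adjoint_eq_adjoint_toPMap_of_dense _ hd]
  have h2 : ContinuousLinearMap.adjoint (1 : L2R →L[ℂ] L2R) = 1 :=
    (IsSelfAdjoint.one (R := L2R →L[ℂ] L2R)).adjoint_eq
  rw [h2]

/-! ### The main theorem -/

/-- For the multiplication operators `(A f)(x) = e^{-x²} f(x)` (bounded) and
`(B f)(x) = e^{x²} f(x)` (unbounded, on its natural domain) on `L²(ℝ)`: `A` is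
self-adjoint, `B` is self-adjoint (hence closed), `BA` is the identity on `L²(ℝ)`
(hence normal), `AB` is the restriction of the identity to `D(B)`, hence not closed
and therefore not normal, and `A* A B ⊂ B A* A`. -/
theorem kaplansky_counterexample
    (A : L2R →L[ℂ] L2R)
    (hA : ∀ f : L2R, (A f : ℝ → ℂ) =ᵐ[volume] fun x : ℝ => (Real.exp (-x ^ 2) : ℂ) * f x)
    (B : L2R →ₗ.[ℂ] L2R)
    (hBdom : ∀ f : L2R, f ∈ B.domain ↔
      MemLp (fun x : ℝ => (Real.exp (x ^ 2) : ℂ) * f x) 2 volume)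
    (hB : ∀ f : B.domain,
      (B f : ℝ → ℂ) =ᵐ[volume] fun x : ℝ => (Real.exp (x ^ 2) : ℂ) * (f : L2R) x) :
    IsSelfAdjoint A ∧
    B.adjoint = B ∧ B.IsClosed ∧
    B.pcomp (ofCLM A) = (LinearMap.id : L2R →ₗ[ℂ] L2R).toPMap ⊤ ∧
    IsNormalPMap (B.pcomp (ofCLM A)) ∧
    (ofCLM A).pcomp B ≤ (LinearMap.id : L2R →ₗ[ℂ] L2R).toPMap ⊤ ∧
    ((ofCLM A).pcomp B).domain = B.domain ∧
    ¬((ofCLM A).pcomp B).IsClosed ∧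
    ¬IsNormalPMap ((ofCLM A).pcomp B) ∧
    (ofCLM (ContinuousLinearMap.adjoint A * A)).pcomp B ≤
      B.pcomp (ofCLM (ContinuousLinearMap.adjoint A * A)) := by
  have hdense := B_dense B hBdom
  have hBsa := B_selfAdjoint B hBdom hB
  have hBclosed := B_isClosed B hBdom hB
  -- A is self-adjoint
  have hAsa : IsSelfAdjoint A := by
    rw [ContinuousLinearMap.isSelfAdjoint_iff_isSymmetric]
    intro f g
    simp only [ContinuousLinearMap.coe_coe]
    rw [inner_L2, inner_L2]
    apply integral_congr_ae
    filter_upwards [hA f, hA g] with x h1 h2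
    rw [h1, h2, map_mul, Complex.conj_ofReal]
    ring
  -- A maps into the domain of B, and B (A f) = f
  have hAmem : ∀ f : L2R, A f ∈ B.domain := by
    intro f
    rw [hBdom]
    refine (memLp_congr_ae ?_).mpr (Lp.memLp f)
    filter_upwards [hA f] with x hx
    rw [hx, ← mul_assoc, exp_mul_exp_neg, one_mul]
  have hBA_eq : ∀ (f : L2R) (h : A f ∈ B.domain), B ⟨A f, h⟩ = f := by
    intro f h
    have h1 : (B ⟨A f, h⟩ : ℝ → ℂ) =ᵐ[volume]
        fun x : ℝ => (Real.exp (x ^ 2) : ℂ) * (A f) x := hB _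
    apply Lp.ext (μ := volume)
    filter_upwards [h1, hA f] with x hx1 hx2
    rw [hx1, hx2, ← mul_assoc, exp_mul_exp_neg, one_mul]
  -- BA = identity
  have hBAdom : (B.pcomp (ofCLM A)).domain = ⊤ := by
    rw [eq_top_iff]
    intro x _
    rw [mem_pcomp_domain]
    exact ⟨Submodule.mem_top, hAmem x⟩
  have hBA : B.pcomp (ofCLM A) = (LinearMap.id : L2R →ₗ[ℂ] L2R).toPMap ⊤ := by
    apply LinearPMap.ext
    · rw [hBAdom, LinearMap.toPMap_domain]
    · intro x₀ hx₀ hy₀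
      let x : (B.pcomp (ofCLM A)).domain := ⟨x₀, hx₀⟩
      show B.pcomp (ofCLM A) x = _
      have hx : (x : L2R) ∈ (ofCLM A).domain := Submodule.mem_top
      have hx2 : (ofCLM A) ⟨(x : L2R), hx⟩ ∈ B.domain := hAmem (x : L2R)
      rw [pcomp_apply B (ofCLM A) x hx hx2]
      have he : B ⟨(ofCLM A) ⟨(x : L2R), hx⟩, hx2⟩ = B ⟨A (x : L2R), hAmem (x : L2R)⟩ := rfl
      rw [he, hBA_eq (x : L2R) (hAmem (x : L2R))]
      rfl
  have hBAnormal : IsNormalPMap (B.pcomp (ofCLM A)) := by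
    rw [hBA]
    exact ⟨id_dense, id_isClosed, by rw [id_adjoint]⟩
  -- AB
  have hABdom : ((ofCLM A).pcomp B).domain = B.domain := pcomp_ofCLM_left_domain A B
  have hAB_apply : ∀ x : ((ofCLM A).pcomp B).domain, ((ofCLM A).pcomp B) x = (x : L2R) := by
    intro x
    have hx : (x : L2R) ∈ B.domain := by rw [← hABdom]; exact x.2
    have hx2 : B ⟨(x : L2R), hx⟩ ∈ (ofCLM A).domain := Submodule.mem_top
    rw [pcomp_apply (ofCLM A) B x hx hx2]
    have he : (ofCLM A) ⟨B ⟨(x : L2R), hx⟩, hx2⟩ = A (B ⟨(x : L2R), hx⟩) := rfl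
    rw [he]
    have h2 : (B ⟨(x : L2R), hx⟩ : ℝ → ℂ) =ᵐ[volume]
        fun t : ℝ => (Real.exp (t ^ 2) : ℂ) * (x : L2R) t := hB _
    apply Lp.ext (μ := volume)
    filter_upwards [hA (B ⟨(x : L2R), hx⟩), h2] with t h1 h2'
    rw [h1, h2', ← mul_assoc, mul_comm ((Real.exp (-t ^ 2) : ℂ)) ((Real.exp (t ^ 2) : ℂ)),
      exp_mul_exp_neg, one_mul]
  have hABle : (ofCLM A).pcomp B ≤ (LinearMap.id : L2R →ₗ[ℂ] L2R).toPMap ⊤ := by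
    constructor
    · rw [LinearMap.toPMap_domain]
      exact le_top
    · intro x y hxy
      rw [hAB_apply x]
      exact hxy
  have hnotdomtop : B.domain ≠ ⊤ := by
    intro htop
    have hg : (gauss_memℒp.toLp _ : L2R) ∈ B.domain := htop ▸ Submodule.mem_top
    rw [hBdom] at hg
    apply one_not_memℒp
    refine (memLp_congr_ae ?_).mp hg
    filter_upwards [gauss_memℒp.coeFn_toLp] with x hx
    rw [hx, exp_mul_exp_neg]
  have hABnotclosed : ¬((ofCLM A).pcomp B).IsClosed := by
    intro hcl
    have hset : ((((ofCLM A).pcomp B).graph : Submodule ℂ (L2R × L2R)) : Set (L2R × L2R))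
        = {p : L2R × L2R | p.1 ∈ B.domain ∧ p.2 = p.1} := by
      ext p
      simp only [SetLike.mem_coe, LinearPMap.mem_graph_iff, Set.mem_setOf_eq]
      constructor
      · rintro ⟨z, h1, h2⟩
        refine ⟨by rw [← h1, ← hABdom]; exact z.2, ?_⟩
        rw [← h2, hAB_apply z, h1]
      · rintro ⟨h1, h2⟩
        have hz : p.1 ∈ ((ofCLM A).pcomp B).domain := by rw [hABdom]; exact h1
        exact ⟨⟨p.1, hz⟩, rfl, by rw [hAB_apply ⟨p.1, hz⟩]; exact h2.symm⟩
    have hclosedset : IsClosed ((B.domain : Set L2R)) := by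
      have hpre : (B.domain : Set L2R) =
          (fun f : L2R => (f, f)) ⁻¹' ((((ofCLM A).pcomp B).graph :
            Submodule ℂ (L2R × L2R)) : Set (L2R × L2R)) := by
        ext f
        rw [Set.mem_preimage, hset]
        simp
      rw [hpre]
      exact (hcl : IsClosed ((((ofCLM A).pcomp B).graph : Submodule ℂ (L2R × L2R)) :
        Set (L2R × L2R))).preimage (continuous_id.prodMk continuous_id)
    apply hnotdomtop
    rw [Submodule.eq_top_iff']
    intro f
    have hcu := hdense.closure_eq
    rw [hclosedset.closure_eq] at hcu
    show f ∈ (B.domain : Set L2R)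
    rw [hcu]
    trivial
  have hABnotnormal : ¬IsNormalPMap ((ofCLM A).pcomp B) := fun h => hABnotclosed h.2.1
  -- A* A B ⊂ B A* A
  have hCfn : ∀ f : L2R, ((ContinuousLinearMap.adjoint A * A) f : ℝ → ℂ) =ᵐ[volume]
      fun x => (Real.exp (-x ^ 2) : ℂ) * ((Real.exp (-x ^ 2) : ℂ) * f x) := by
    intro f
    have hCA : (ContinuousLinearMap.adjoint A * A) f = A (A f) := by
      rw [hAsa.adjoint_eq]; rfl
    rw [hCA]
    filter_upwards [hA (A f), hA f] with x h1 h2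
    rw [h1, h2]
  have hCmem : ∀ f : L2R, (ContinuousLinearMap.adjoint A * A) f ∈ B.domain := by
    intro f
    rw [hBdom]
    have heq : (fun x : ℝ => (Real.exp (x ^ 2) : ℂ) *
        ((ContinuousLinearMap.adjoint A * A) f) x) =ᵐ[volume]
        fun x => (Real.exp (-x ^ 2) : ℂ) * f x := by
      filter_upwards [hCfn f] with x hx
      rw [hx, ← mul_assoc, exp_mul_exp_neg, one_mul]
    refine (memLp_congr_ae heq).mpr ?_
    refine memℒp_mul_of_bound (Lp.memLp f) gauss_memℒp.1 1 ?_
    filter_upwards with x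
    rw [Complex.norm_real, Real.norm_eq_abs, abs_of_pos (Real.exp_pos _)]
    exact Real.exp_le_one_iff.mpr (neg_nonpos.mpr (sq_nonneg x))
  have hCdom : ((ofCLM (ContinuousLinearMap.adjoint A * A)).pcomp B).domain = B.domain :=
    pcomp_ofCLM_left_domain _ B
  refine ⟨hAsa, hBsa, hBclosed, hBA, hBAnormal, hABle, hABdom, hABnotclosed, hABnotnormal, ?_, ?_⟩
  · rw [hCdom]
    intro f hf
    rw [mem_pcomp_domain]
    exact ⟨Submodule.mem_top, hCmem f⟩
  · intro x z hxz
    have hx : (x : L2R) ∈ B.domain := by rw [← hCdom]; exact x.2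
    have hx2 : B ⟨(x : L2R), hx⟩ ∈ (ofCLM (ContinuousLinearMap.adjoint A * A)).domain :=
      Submodule.mem_top
    rw [pcomp_apply _ B x hx hx2]
    have he1 : (ofCLM (ContinuousLinearMap.adjoint A * A)) ⟨B ⟨(x : L2R), hx⟩, hx2⟩
        = (ContinuousLinearMap.adjoint A * A) (B ⟨(x : L2R), hx⟩) := rfl
    rw [he1]
    have hz1 : (z : L2R) ∈ (ofCLM (ContinuousLinearMap.adjoint A * A)).domain :=
      Submodule.mem_top
    have hz2 : (ofCLM (ContinuousLinearMap.adjoint A * A)) ⟨(z : L2R), hz1⟩ ∈ B.domain :=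
      hCmem (z : L2R)
    rw [pcomp_apply B _ z hz1 hz2]
    have he2 : B ⟨(ofCLM (ContinuousLinearMap.adjoint A * A)) ⟨(z : L2R), hz1⟩, hz2⟩
        = B ⟨(ContinuousLinearMap.adjoint A * A) (z : L2R), hCmem (z : L2R)⟩ := rfl
    rw [he2]
    have h2 : (B ⟨(x : L2R), hx⟩ : ℝ → ℂ) =ᵐ[volume]
        fun t : ℝ => (Real.exp (t ^ 2) : ℂ) * (x : L2R) t := hB _
    have h3 : (B ⟨(ContinuousLinearMap.adjoint A * A) (z : L2R), hCmem (z : L2R)⟩ : ℝ → ℂ)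
        =ᵐ[volume] fun t : ℝ => (Real.exp (t ^ 2) : ℂ) *
          ((ContinuousLinearMap.adjoint A * A) (z : L2R)) t := hB _
    apply Lp.ext (μ := volume)
    filter_upwards [hCfn (B ⟨(x : L2R), hx⟩ : L2R), h2, h3, hCfn (z : L2R)]
      with t h1' h2' h3' h4'
    rw [h1', h2', h3', h4', hxz]
    ring
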